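/- For every λ ∈ (0,1) and every χ ∈ ℝ, the derivative f_λ' of f_λ satisfies χ³ · f_λ'(χ) ≥ χ⁶ − χ⁴. -/

import Mathlib

/-- The smoothed double-well potential `f_λ`. -/
noncomputable def smoothPotential (l x : ℝ) : ℝ :=
  if 1 + l ≤ x then 1 / (2 * l) * (x - (1 + l / 2)) ^ 2 + 1 / 4 * (x ^ 2 - 1) ^ 2 + l / 24
  else if 1 < x then 1 / 4 * (x ^ 2 - 1) ^ 2 + 1 / (6 * l ^ 2) * (x - 1) ^ 3
  else if -1 ≤ x then 1 / 4 * (x ^ 2 - 1) ^ 2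
  else if -1 - l < x then 1 / 4 * (x ^ 2 - 1) ^ 2 - 1 / (6 * l ^ 2) * (x + 1) ^ 3
  else 1 / (2 * l) * (x + (1 + l / 2)) ^ 2 + 1 / 4 * (x ^ 2 - 1) ^ 2 + l / 24

lemma sp_even {l : ℝ} (hl0 : 0 < l) (x : ℝ) :
    smoothPotential l (-x) = smoothPotential l x := by
  unfold smoothPotential
  split_ifs <;> first | ring1 | (exfalso; linarith)

lemma deriv_sp_neg {l : ℝ} (hl0 : 0 < l) (x : ℝ) :
    deriv (smoothPotential l) x = - deriv (smoothPotential l) (-x) := by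
  have h : smoothPotential l = fun y => smoothPotential l (-y) :=
    funext fun y => (sp_even hl0 y).symm
  conv_lhs => rw [h]
  exact deriv_comp_neg (f := smoothPotential l) x

lemma hq (x : ℝ) : HasDerivAt (fun y : ℝ => 1 / 4 * (y ^ 2 - 1) ^ 2) (x * (x ^ 2 - 1)) x := by
  have := (((hasDerivAt_pow 2 x).sub_const 1).pow 2).const_mul (1 / 4 : ℝ)
  refine this.congr_deriv ?_
  norm_num
  ring1

lemma hP1 {l : ℝ} (hl : l ≠ 0) (x : ℝ) :
    HasDerivAt (fun y : ℝ => 1 / (2 * l) * (y - (1 + l / 2)) ^ 2 + 1 / 4 * (y ^ 2 - 1) ^ 2 + l / 24)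
      (1 / l * (x - (1 + l / 2)) + x * (x ^ 2 - 1)) x := by
  have h1 : HasDerivAt (fun y : ℝ => 1 / (2 * l) * (y - (1 + l / 2)) ^ 2)
      (1 / l * (x - (1 + l / 2))) x := by
    have := (((hasDerivAt_id' (x := x)).sub_const (1 + l / 2)).pow 2).const_mul (1 / (2 * l))
    refine this.congr_deriv ?_
    rw [pow_one, one_div, one_div, mul_inv]
    ring1
  exact (h1.add (hq x)).add_const (l / 24)

lemma hP2 {l : ℝ} (hl : l ≠ 0) (x : ℝ) :
    HasDerivAt (fun y : ℝ => 1 / 4 * (y ^ 2 - 1) ^ 2 + 1 / (6 * l ^ 2) * (y - 1) ^ 3)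
      (x * (x ^ 2 - 1) + 1 / (2 * l ^ 2) * (x - 1) ^ 2) x := by
  have h1 : HasDerivAt (fun y : ℝ => 1 / (6 * l ^ 2) * (y - 1) ^ 3)
      (1 / (2 * l ^ 2) * (x - 1) ^ 2) x := by
    have := (((hasDerivAt_id' (x := x)).sub_const 1).pow 3).const_mul (1 / (6 * l ^ 2))
    refine this.congr_deriv ?_
    rw [show (3:ℕ) - 1 = 2 from rfl, one_div, one_div, mul_inv, mul_inv]
    ring1
  exact (hq x).add h1

lemma eqA {l : ℝ} (hl0 : 0 < l) :
    ∀ y ∈ Set.Icc (-1 : ℝ) 1, smoothPotential l y = 1 / 4 * (y ^ 2 - 1) ^ 2 := by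
  intro y hy
  rw [smoothPotential, if_neg (by linarith [hy.2]), if_neg (by linarith [hy.2]),
    if_pos hy.1]

lemma eqB {l : ℝ} (hl0 : 0 < l) :
    ∀ y ∈ Set.Icc (1 : ℝ) (1 + l),
      smoothPotential l y = 1 / 4 * (y ^ 2 - 1) ^ 2 + 1 / (6 * l ^ 2) * (y - 1) ^ 3 := by
  intro y hy
  rcases eq_or_lt_of_le hy.2 with rfl | h2
  · rw [smoothPotential, if_pos le_rfl]
    have hl : l ≠ 0 := ne_of_gt hl0
    field_simp
    ring
  · rcases eq_or_lt_of_le hy.1 with rfl | h1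
    · rw [smoothPotential, if_neg (by linarith), if_neg (lt_irrefl _),
        if_pos (by norm_num)]
      norm_num
    · rw [smoothPotential, if_neg (by linarith), if_pos h1]

lemma eqC {l : ℝ} :
    ∀ y ∈ Set.Ici (1 + l),
      smoothPotential l y =
        1 / (2 * l) * (y - (1 + l / 2)) ^ 2 + 1 / 4 * (y ^ 2 - 1) ^ 2 + l / 24 := by
  intro y hy
  rw [smoothPotential, if_pos (Set.mem_Ici.mp hy)]

lemma aux {l : ℝ} (hl0 : 0 < l) (hl1 : l < 1) (x : ℝ) (hx : 0 ≤ x) :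
    x ^ 3 * deriv (smoothPotential l) x ≥ x ^ 6 - x ^ 4 := by
  have hl : l ≠ 0 := ne_of_gt hl0
  rcases lt_or_ge x 1 with h1 | h1
  · -- interior region [0,1)
    have he : smoothPotential l =ᶠ[nhds x] fun y : ℝ => 1 / 4 * (y ^ 2 - 1) ^ 2 :=
      Filter.eventuallyEq_of_mem (Ioo_mem_nhds (by linarith) h1)
        (fun y hy => eqA hl0 y ⟨hy.1.le, hy.2.le⟩)
    rw [he.deriv_eq, (hq x).deriv]
    nlinarith
  rcases eq_or_lt_of_le h1 with rfl | h1
  · -- junction at 1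
    have hL : HasDerivWithinAt (smoothPotential l) (1 * ((1:ℝ) ^ 2 - 1)) (Set.Icc (-1) 1) 1 :=
      (hq 1).hasDerivWithinAt.congr (eqA hl0) (eqA hl0 1 (by norm_num))
    have hR : HasDerivWithinAt (smoothPotential l) (1 * ((1:ℝ) ^ 2 - 1)) (Set.Icc 1 (1 + l)) 1 := by
      have := (hP2 hl 1).hasDerivWithinAt.congr (eqB hl0) (eqB hl0 1 (by constructor <;> linarith))
      refine this.congr_deriv ?_
      norm_num
    have hU : HasDerivAt (smoothPotential l) (1 * ((1:ℝ) ^ 2 - 1)) 1 := by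
      apply (hL.union hR).hasDerivAt
      apply Filter.mem_of_superset (Ioo_mem_nhds (show (-1:ℝ) < 1 by norm_num) (show (1:ℝ) < 1 + l by linarith))
      intro y hy
      rcases le_or_gt y 1 with h | h
      · exact Or.inl ⟨hy.1.le, h⟩
      · exact Or.inr ⟨h.le, hy.2.le⟩
    rw [hU.deriv]
    norm_num
  rcases lt_or_ge x (1 + l) with h2 | h2
  · -- interior region (1, 1+l)
    have he : smoothPotential l =ᶠ[nhds x]
        fun y : ℝ => 1 / 4 * (y ^ 2 - 1) ^ 2 + 1 / (6 * l ^ 2) * (y - 1) ^ 3 :=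
      Filter.eventuallyEq_of_mem (Ioo_mem_nhds h1 h2)
        (fun y hy => eqB hl0 y ⟨hy.1.le, hy.2.le⟩)
    rw [he.deriv_eq, (hP2 hl x).deriv]
    have hc : 0 ≤ 1 / (2 * l ^ 2) * (x - 1) ^ 2 := by positivity
    have hx3 : 0 < x ^ 3 := by positivity
    nlinarith [mul_nonneg hx3.le hc]
  rcases eq_or_lt_of_le h2 with rfl | h2
  · -- junction at 1+l
    set D : ℝ := 1 / l * ((1 + l) - (1 + l / 2)) + (1 + l) * ((1 + l) ^ 2 - 1) with hD
    have hL : HasDerivWithinAt (smoothPotential l) D (Set.Icc 1 (1 + l)) (1 + l) := by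
      have := (hP2 hl (1 + l)).hasDerivWithinAt.congr (eqB hl0)
        (eqB hl0 (1 + l) (by constructor <;> linarith))
      refine this.congr_deriv ?_
      rw [hD]
      field_simp
      ring
    have hR : HasDerivWithinAt (smoothPotential l) D (Set.Ici (1 + l)) (1 + l) :=
      (hP1 hl (1 + l)).hasDerivWithinAt.congr eqC (eqC (1 + l) Set.self_mem_Ici)
    have hU : HasDerivAt (smoothPotential l) D (1 + l) := by
      apply (hL.union hR).hasDerivAt
      apply Filter.mem_of_superset (Ioi_mem_nhds (by linarith : (1:ℝ) < 1 + l))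
      intro y hy
      rcases le_or_gt y (1 + l) with h | h
      · exact Or.inl ⟨le_of_lt hy, h⟩
      · exact Or.inr h.le
    rw [hU.deriv, hD]
    have e : 1 / l * ((1 + l) - (1 + l / 2)) = 1 / 2 := by field_simp; ring
    rw [e]
    nlinarith [pow_pos (show (0:ℝ) < 1 + l by linarith) 3]
  · -- interior region (1+l, ∞)
    have he : smoothPotential l =ᶠ[nhds x]
        fun y : ℝ => 1 / (2 * l) * (y - (1 + l / 2)) ^ 2 + 1 / 4 * (y ^ 2 - 1) ^ 2 + l / 24 :=
      Filter.eventuallyEq_of_mem (Ioi_mem_nhds h2) (fun y hy => eqC y (Set.mem_Ici.mpr (le_of_lt hy)))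
    rw [he.deriv_eq, (hP1 hl x).deriv]
    have hx3 : 0 < x ^ 3 := by positivity
    have hc : 0 < x - (1 + l / 2) := by linarith
    nlinarith [mul_pos hx3 (mul_pos (one_div_pos.mpr hl0) hc)]

theorem cube_mul_deriv_smoothPotential_ge (l : ℝ) (hl : l ∈ Set.Ioo (0 : ℝ) 1) (x : ℝ) :
    x ^ 3 * deriv (smoothPotential l) x ≥ x ^ 6 - x ^ 4 := by
  obtain ⟨hl0, hl1⟩ := hl
  rcases le_or_gt 0 x with hx | hx
  · exact aux hl0 hl1 x hx
  · have h := aux hl0 hl1 (-x) (by linarith)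
    have hd := deriv_sp_neg hl0 x
    have e1 : x ^ 3 * deriv (smoothPotential l) x =
        (-x) ^ 3 * deriv (smoothPotential l) (-x) := by rw [hd]; ring
    rw [e1, ge_iff_le, show x ^ 6 - x ^ 4 = (-x) ^ 6 - (-x) ^ 4 from by ring]
    exact h
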